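/- For M ≥ 4 a power of 2 and 0 < θ < π/M, the sequence a_k = 2cos(πk/M + θ/2) − 2cos(π(k+1)/M − θ/2) is increasing in k for k = 0, 1, ..., M/2 − 1. -/
import Mathlib


open Real

/-- For `M ≥ 4` a power of 2 and `0 < θ < π/M`, the sequence
`a_k = 2cos(πk/M + θ/2) − 2cos(π(k+1)/M − θ/2)` is increasing in `k`
for `k = 0, 1, ..., M/2 − 1`. -/
theorem stmt_0 (M : ℕ) (hM : 4 ≤ M) (hpow : ∃ r : ℕ, M = 2 ^ r)
    (θ : ℝ) (hθ0 : 0 < θ) (hθ : θ < π / M) :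
    ∀ k : ℕ, k + 1 ≤ M / 2 - 1 →
      2 * Real.cos (π * k / M + θ / 2) - 2 * Real.cos (π * (k + 1) / M - θ / 2)
        ≤ 2 * Real.cos (π * (k + 1) / M + θ / 2)
            - 2 * Real.cos (π * (k + 2) / M - θ / 2) := by
  intro k hk
  have hπ := Real.pi_pos
  have hMR : (0:ℝ) < M := by
    have : (4:ℝ) ≤ M := by exact_mod_cast hM
    linarith
  have hMne : (M:ℝ) ≠ 0 := ne_of_gt hMR
  have hnat : 2 * (k + 1) ≤ M := by omega
  have hk2 : (k:ℝ) + 1 ≤ (M:ℝ) / 2 := by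
    have : ((2 * (k + 1) : ℕ) : ℝ) ≤ (M : ℝ) := by exact_mod_cast hnat
    push_cast at this
    linarith
  have hθM : θ < π / M := hθ
  have hπM : π / M ≤ π := by
    rw [div_le_iff₀ hMR]
    nlinarith
  have hcosm : 0 ≤ Real.cos (π * ((k:ℝ) + 1) / M) := by
    apply Real.cos_nonneg_of_mem_Icc
    constructor
    · have h1 : 0 ≤ π * ((k:ℝ) + 1) / M := by positivity
      linarith
    · rw [div_le_iff₀ hMR]
      nlinarith
  have hmono : Real.cos (π / M - θ / 2) ≤ Real.cos (θ / 2) := by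
    apply Real.cos_le_cos_of_nonneg_of_le_pi
    · linarith
    · have h0 : 0 < π / M := by positivity
      linarith
    · linarith
  have e1 : Real.cos (π * (k:ℝ) / M + θ / 2) + Real.cos (π * ((k:ℝ) + 2) / M - θ / 2)
      = 2 * Real.cos (π * ((k:ℝ) + 1) / M) * Real.cos (π / M - θ / 2) := by
    rw [Real.cos_add_cos]
    have a1 : (π * (k:ℝ) / M + θ / 2 + (π * ((k:ℝ) + 2) / M - θ / 2)) / 2
        = π * ((k:ℝ) + 1) / M := by field_simp; ring
    have a2 : (π * (k:ℝ) / M + θ / 2 - (π * ((k:ℝ) + 2) / M - θ / 2)) / 2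
        = -(π / M - θ / 2) := by field_simp; ring
    rw [a1, a2, Real.cos_neg]
  have e2 : Real.cos (π * ((k:ℝ) + 1) / M + θ / 2) + Real.cos (π * ((k:ℝ) + 1) / M - θ / 2)
      = 2 * Real.cos (π * ((k:ℝ) + 1) / M) * Real.cos (θ / 2) := by
    rw [Real.cos_add_cos]
    have a1 : (π * ((k:ℝ) + 1) / M + θ / 2 + (π * ((k:ℝ) + 1) / M - θ / 2)) / 2
        = π * ((k:ℝ) + 1) / M := by ring
    have a2 : (π * ((k:ℝ) + 1) / M + θ / 2 - (π * ((k:ℝ) + 1) / M - θ / 2)) / 2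
        = θ / 2 := by ring
    rw [a1, a2]
  have hfinal := mul_le_mul_of_nonneg_left hmono hcosm
  linarith
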